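/- For x ≥ 0, x·Φ(x/√2) + √2·φ(x/√2) ≥ 1/√π, where φ, Φ are the standard normal PDF and CDF. Consequently, for a diagram E with k points and σ = 1, ‖G_E‖₁ ≥ k/√π. -/

import Mathlib

open MeasureTheory Real Filter
open Topology

noncomputable def phi (t : ℝ) : ℝ := Real.exp (-t^2/2) / Real.sqrt (2*Real.pi)

noncomputable def Phi (x : ℝ) : ℝ := ∫ s in Set.Iic x, phi s

lemma phi_eq (t : ℝ) : phi t = Real.exp (-(2⁻¹:ℝ) * t^2) / Real.sqrt (2*Real.pi) := by
  unfold phi; ring_nf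

lemma phi_pos (t : ℝ) : 0 < phi t := by
  apply div_pos (exp_pos _); positivity

lemma phi_cont : Continuous phi := by
  unfold phi; fun_prop

lemma integrable_phi : Integrable phi := by
  have : Integrable (fun t : ℝ => Real.exp (-(2⁻¹:ℝ) * t^2)) := integrable_exp_neg_mul_sq (by norm_num)
  have e : phi = fun t : ℝ => Real.exp (-(2⁻¹:ℝ) * t^2) / Real.sqrt (2*Real.pi) :=
    funext phi_eq
  rw [e]; exact this.div_const _

lemma integral_phi : ∫ t, phi t = 1 := by
  have e : phi = fun t : ℝ => Real.exp (-(2⁻¹:ℝ) * t^2) / Real.sqrt (2*Real.pi) :=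
    funext phi_eq
  rw [e, integral_div, integral_gaussian]
  rw [div_eq_one_iff_eq (by positivity)]
  rw [show Real.pi / (2⁻¹:ℝ) = 2 * Real.pi by ring]

lemma Phi_nonneg (x : ℝ) : 0 ≤ Phi x :=
  setIntegral_nonneg measurableSet_Iic (fun s _ => (phi_pos s).le)

lemma Phi_le_one (x : ℝ) : Phi x ≤ 1 := by
  rw [← integral_phi]
  exact setIntegral_le_integral integrable_phi (Eventually.of_forall fun s => (phi_pos s).le)

lemma Phi_mono : Monotone Phi := fun a b h =>
  setIntegral_mono_set integrable_phi.integrableOn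
    (Eventually.of_forall fun s => (phi_pos s).le)
    (HasSubset.Subset.eventuallyLE (Set.Iic_subset_Iic.mpr h))

lemma Phi_eq_add (x : ℝ) : Phi x = Phi 0 + ∫ s in (0:ℝ)..x, phi s := by
  rw [← intervalIntegral.integral_Iic_sub_Iic integrable_phi.integrableOn integrable_phi.integrableOn]
  unfold Phi; ring

lemma hasDerivAt_Phi (x : ℝ) : HasDerivAt Phi (phi x) x := by
  have : HasDerivAt (fun y => Phi 0 + ∫ s in (0:ℝ)..y, phi s) (phi x) x := by
    apply HasDerivAt.const_add
    exact (phi_cont.integral_hasStrictDerivAt 0 x).hasDerivAt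
  convert this using 1
  funext y; exact Phi_eq_add y

lemma Phi_cont : Continuous Phi := by
  have : Differentiable ℝ Phi := fun x => (hasDerivAt_Phi x).differentiableAt
  exact this.continuous

lemma phi_neg (t : ℝ) : phi (-t) = phi t := by unfold phi; rw [neg_sq]

lemma Phi_le_exp (x : ℝ) (hx : x ≤ 0) : Phi x ≤ Real.exp (-x^2/2) := by
  have h1 : Phi x ≤ ∫ s in Set.Iic x, Real.exp (-x^2/2) * phi (s - x) := by
    apply setIntegral_mono_on integrable_phi.integrableOn
    · exact ((integrable_phi.comp_sub_right x).const_mul _).integrableOn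
    · exact measurableSet_Iic
    · intro s hs
      simp only [Set.mem_Iic] at hs
      unfold phi
      rw [← mul_div_assoc, div_le_div_iff_of_pos_right (by positivity), ← Real.exp_add]
      apply Real.exp_le_exp.mpr
      nlinarith [sq_nonneg (s - x)]
  have h2 : ∫ s in Set.Iic x, Real.exp (-x^2/2) * phi (s - x)
      = Real.exp (-x^2/2) * Phi 0 := by
    rw [integral_const_mul]
    congr 1
    have A : MeasurableEmbedding fun s : ℝ => s - x :=
      (Homeomorph.subRight x).isClosedEmbedding.measurableEmbedding
    have := A.setIntegral_map (μ := volume) phi (Set.Iic 0)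
    rw [show Measure.map (fun s : ℝ => s - x) volume = volume by
      simpa [sub_eq_add_neg] using map_add_right_eq_self volume (-x)] at this
    rw [show (fun s : ℝ => s - x) ⁻¹' Set.Iic 0 = Set.Iic x by
      ext s; simp [sub_nonpos]] at this
    exact this.symm
  calc Phi x ≤ Real.exp (-x^2/2) * Phi 0 := h1.trans_eq h2
    _ ≤ Real.exp (-x^2/2) * 1 := by
        exact mul_le_mul_of_nonneg_left (Phi_le_one 0) (Real.exp_nonneg _)
    _ = _ := mul_one _

lemma tendsto_Phi_atBot : Tendsto Phi atBot (𝓝 0) := by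
  apply squeeze_zero' (Eventually.of_forall fun x => Phi_nonneg x)
  · filter_upwards [eventually_le_atBot (0:ℝ)] with x hx
    exact Phi_le_exp x hx
  · have hsq : Tendsto (fun x : ℝ => x^2) atBot atTop := by
      have h1 : Tendsto (fun x : ℝ => x^2) atTop atTop :=
        tendsto_pow_atTop (two_ne_zero)
      have h2 : Tendsto (fun x : ℝ => -x) atBot atTop := tendsto_neg_atBot_atTop
      have := h1.comp h2
      simpa [Function.comp_def] using this
    have h3 : Tendsto (fun x : ℝ => -x^2/2) atBot atBot := by
      have h4 : Tendsto (fun x : ℝ => -x^2) atBot atBot := tendsto_neg_atTop_atBot.comp hsq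
      exact h4.atBot_div_const (by norm_num)
    exact Real.tendsto_exp_atBot.comp h3

lemma Phi_add_Phi_neg (x : ℝ) : Phi x + Phi (-x) = 1 := by
  have h : Phi (-x) = ∫ s in Set.Ioi x, phi s := by
    unfold Phi
    rw [show (∫ s in Set.Iic (-x), phi s) = ∫ s in Set.Iic (-x), phi (-s) by
      exact setIntegral_congr_fun measurableSet_Iic fun s _ => (phi_neg s).symm]
    rw [integral_comp_neg_Iic]
    simp
  rw [h]
  unfold Phi
  rw [intervalIntegral.integral_Iic_add_Ioi integrable_phi.integrableOn integrable_phi.integrableOn, integral_phi]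

lemma tendsto_Phi_atTop : Tendsto Phi atTop (𝓝 1) := by
  have : Tendsto (fun x => 1 - Phi (-x)) atTop (𝓝 (1 - 0)) :=
    (tendsto_const_nhds.sub (tendsto_Phi_atBot.comp tendsto_neg_atTop_atBot))
  simp only [sub_zero] at this
  apply this.congr
  intro x
  have := Phi_add_Phi_neg x
  linarith

lemma integrable_gauss_shift (b : ℝ) : Integrable (fun t : ℝ => Real.exp (-(t-b)^2/2)) := by
  have h : Integrable (fun t : ℝ => Real.exp (-(2⁻¹:ℝ) * t^2)) :=
    integrable_exp_neg_mul_sq (by norm_num)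
  have := h.comp_sub_right b
  apply this.congr
  filter_upwards with t
  ring_nf

lemma Phi_prod_cont (b d : ℝ) : Continuous (fun t => Phi (t - b) * Phi (d - t)) :=
  ((Phi_cont.comp (continuous_id.sub continuous_const)).mul
    (Phi_cont.comp (continuous_const.sub continuous_id)))

lemma integrable_PhiProd (b d : ℝ) : Integrable (fun t => Phi (t - b) * Phi (d - t)) := by
  set h : ℝ → ℝ := fun t => Real.exp (-(t-b)^2/2) + Real.exp (-(t-d)^2/2)
    + Set.indicator (Set.Icc b d) (fun _ => (1:ℝ)) t with hh
  have hint : Integrable h := by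
    apply ((integrable_gauss_shift b).add (integrable_gauss_shift d)).add
    rw [integrable_indicator_iff measurableSet_Icc]
    exact integrableOn_const measure_Icc_lt_top.ne
  apply Integrable.mono' hint (Phi_prod_cont b d).aestronglyMeasurable
  filter_upwards with t
  have h0 : (0:ℝ) ≤ Phi (t-b) * Phi (d-t) := mul_nonneg (Phi_nonneg _) (Phi_nonneg _)
  rw [Real.norm_eq_abs, abs_of_nonneg h0]
  have hind : 0 ≤ Set.indicator (Set.Icc b d) (fun _ => (1:ℝ)) t := by
    apply Set.indicator_nonneg; intro x _; norm_num
  rcases le_total t b with htb | hbt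
  · have h1 : Phi (t-b) ≤ Real.exp (-(t-b)^2/2) := Phi_le_exp _ (by linarith)
    have h2 : Phi (t-b) * Phi (d-t) ≤ Real.exp (-(t-b)^2/2) :=
      le_trans (mul_le_of_le_one_right (Phi_nonneg _) (Phi_le_one _)) h1
    have h3 : (0:ℝ) ≤ Real.exp (-(t-d)^2/2) := Real.exp_nonneg _
    simp only [hh]; linarith
  · rcases le_total t d with htd | hdt
    · have h2 : Phi (t-b) * Phi (d-t) ≤ 1 :=
        mul_le_one₀ (Phi_le_one _) (Phi_nonneg _) (Phi_le_one _)
      have h4 : Set.indicator (Set.Icc b d) (fun _ => (1:ℝ)) t = 1 :=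
        Set.indicator_of_mem (Set.mem_Icc.mpr ⟨hbt, htd⟩) _
      have h3 : (0:ℝ) ≤ Real.exp (-(t-d)^2/2) := Real.exp_nonneg _
      have h5 : (0:ℝ) ≤ Real.exp (-(t-b)^2/2) := Real.exp_nonneg _
      simp only [hh]; rw [h4]; linarith
    · have h1 : Phi (d-t) ≤ Real.exp (-(d-t)^2/2) := Phi_le_exp _ (by linarith)
      have h2 : Phi (t-b) * Phi (d-t) ≤ Real.exp (-(d-t)^2/2) :=
        le_trans (mul_le_of_le_one_left (Phi_nonneg _) (Phi_le_one _)) h1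
      have h5 : (0:ℝ) ≤ Real.exp (-(t-b)^2/2) := Real.exp_nonneg _
      have he : Real.exp (-(d-t)^2/2) = Real.exp (-(t-d)^2/2) := by ring_nf
      simp only [hh]; rw [← he]; linarith

lemma hasDerivAt_phi (t : ℝ) : HasDerivAt phi (-t * phi t) t := by
  have h : HasDerivAt (fun t : ℝ => -t^2/2) (-t) t := by
    have h2 := ((hasDerivAt_pow 2 t).neg.div_const 2)
    refine h2.congr_deriv ?_
    norm_num
    ring
  have h3 := (h.exp).div_const (Real.sqrt (2*Real.pi))
  refine h3.congr_deriv ?_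
  show Real.exp (-t^2/2) * -t / Real.sqrt (2*Real.pi) = -t * phi t
  unfold phi; ring

lemma phi_sqrt_two (s : ℝ) :
    (1/Real.sqrt π) * (phi (Real.sqrt 2 * s) * Real.sqrt 2) = 2 * (phi s * phi s) := by
  unfold phi
  have h2 : Real.sqrt 2 * Real.sqrt 2 = 2 := Real.mul_self_sqrt (by norm_num)
  have hπ : Real.sqrt π * Real.sqrt π = π := Real.mul_self_sqrt pi_pos.le
  have h2π : Real.sqrt (2*π) = Real.sqrt 2 * Real.sqrt π := Real.sqrt_mul (by norm_num) π
  have he : Real.exp (-(Real.sqrt 2 * s)^2/2) = Real.exp (-s^2/2) * Real.exp (-s^2/2) := by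
    rw [← Real.exp_add]
    congr 1
    rw [mul_pow]
    rw [Real.sq_sqrt (by norm_num : (0:ℝ) ≤ 2)]
    ring
  rw [he, h2π]
  have hπ0 : (0:ℝ) < Real.sqrt π := Real.sqrt_pos.mpr pi_pos
  have h20 : (0:ℝ) < Real.sqrt 2 := Real.sqrt_pos.mpr (by norm_num)
  field_simp
  linear_combination h2

noncomputable def K (s : ℝ) : ℝ :=
  s * Phi s * Phi (-s) - phi s * (2 * Phi s - 1) + (1/Real.sqrt π) * Phi (Real.sqrt 2 * s)

lemma hasDerivAt_K (s : ℝ) : HasDerivAt K (Phi s * Phi (-s)) s := by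
  have hPhiNeg : HasDerivAt (fun t => Phi (-t)) (phi (-s) * (-1)) s :=
    (hasDerivAt_Phi (-s)).comp s (hasDerivAt_neg s)
  have hA : HasDerivAt (fun s => s * Phi s * Phi (-s))
      ((1 * Phi s + s * phi s) * Phi (-s) + s * Phi s * (phi (-s) * (-1))) s :=
    (((hasDerivAt_id s).mul (hasDerivAt_Phi s)).mul hPhiNeg)
  have hB : HasDerivAt (fun s => phi s * (2 * Phi s - 1))
      ((-s * phi s) * (2 * Phi s - 1) + phi s * (2 * phi s)) s :=
    (hasDerivAt_phi s).mul (((hasDerivAt_Phi s).const_mul 2).sub_const 1)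
  have hsqrt : HasDerivAt (fun t : ℝ => Real.sqrt 2 * t) (Real.sqrt 2) s := by
    simpa using (hasDerivAt_id s).const_mul (Real.sqrt 2)
  have hC : HasDerivAt (fun s : ℝ => (1/Real.sqrt π) * Phi (Real.sqrt 2 * s))
      ((1/Real.sqrt π) * (phi (Real.sqrt 2 * s) * Real.sqrt 2)) s :=
    ((hasDerivAt_Phi (Real.sqrt 2 * s)).comp s hsqrt).const_mul _
  have htot := (hA.sub hB).add hC
  refine htot.congr_deriv ?_
  rw [phi_sqrt_two, phi_neg]
  have hs : Phi (-s) = 1 - Phi s := by linarith [Phi_add_Phi_neg s]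
  rw [hs]
  ring

lemma tendsto_mul_exp : Tendsto (fun u : ℝ => u * Real.exp (-u^2/2)) atTop (𝓝 0) := by
  apply squeeze_zero'
  · filter_upwards [eventually_ge_atTop (0:ℝ)] with u hu
    positivity
  · filter_upwards [eventually_ge_atTop (2:ℝ)] with u hu
    have : Real.exp (-u^2/2) ≤ Real.exp (-u) := by
      apply Real.exp_le_exp.mpr; nlinarith
    calc u * Real.exp (-u^2/2) ≤ u * Real.exp (-u) :=
          mul_le_mul_of_nonneg_left this (by linarith)
      _ = u^1 * Real.exp (-u) := by ring
  · exact Real.tendsto_pow_mul_exp_neg_atTop_nhds_zero 1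

lemma tendsto_mul_Phi_neg : Tendsto (fun u : ℝ => u * Phi (-u)) atTop (𝓝 0) := by
  apply squeeze_zero'
  · filter_upwards [eventually_ge_atTop (0:ℝ)] with u hu
    exact mul_nonneg hu (Phi_nonneg _)
  · filter_upwards [eventually_ge_atTop (0:ℝ)] with u hu
    have h1 : Phi (-u) ≤ Real.exp (-u^2/2) := by
      have := Phi_le_exp (-u) (by linarith)
      simpa using this
    exact mul_le_mul_of_nonneg_left h1 hu
  · exact tendsto_mul_exp

lemma tendsto_phi_atTop : Tendsto phi atTop (𝓝 0) := by
  have hsq : Tendsto (fun x : ℝ => -x^2/2) atTop atBot := by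
    have h1 : Tendsto (fun x : ℝ => x^2) atTop atTop := tendsto_pow_atTop two_ne_zero
    exact (tendsto_neg_atTop_atBot.comp h1).atBot_div_const (by norm_num)
  have := Real.tendsto_exp_atBot.comp hsq
  have h2 := this.div_const (Real.sqrt (2*Real.pi))
  rw [zero_div] at h2
  exact h2.congr fun x => rfl

lemma tendsto_phi_atBot : Tendsto phi atBot (𝓝 0) := by
  have hneg : Tendsto (fun x : ℝ => -x) atBot atTop := tendsto_neg_atBot_atTop
  have := tendsto_phi_atTop.comp hneg
  apply this.congr
  intro x
  simp only [Function.comp_def, phi_neg]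

lemma tendsto_K_atBot : Tendsto K atBot (𝓝 0) := by
  have hneg : Tendsto (fun x : ℝ => -x) atBot atTop := tendsto_neg_atBot_atTop
  have hPhiNegTop : Tendsto (fun s : ℝ => Phi (-s)) atBot (𝓝 1) :=
    tendsto_Phi_atTop.comp hneg
  have h1 : Tendsto (fun s : ℝ => s * Phi s) atBot (𝓝 0) := by
    have h := (tendsto_mul_Phi_neg.comp hneg).neg
    rw [neg_zero] at h
    apply h.congr
    intro s
    simp only [Function.comp_def, neg_neg]
    ring
  have hterm1 : Tendsto (fun s : ℝ => s * Phi s * Phi (-s)) atBot (𝓝 0) := by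
    have h := h1.mul hPhiNegTop
    rw [zero_mul] at h
    exact h
  have hterm2 : Tendsto (fun s : ℝ => phi s * (2 * Phi s - 1)) atBot (𝓝 0) := by
    have h := tendsto_phi_atBot.mul (((tendsto_Phi_atBot.const_mul 2).sub_const 1))
    rw [show (0:ℝ) * (2 * 0 - 1) = 0 by ring] at h
    exact h
  have hsqrts : Tendsto (fun s : ℝ => Real.sqrt 2 * s) atBot atBot := by
    apply Tendsto.const_mul_atBot (Real.sqrt_pos.mpr (by norm_num)) tendsto_id
  have hterm3 : Tendsto (fun s : ℝ => (1/Real.sqrt π) * Phi (Real.sqrt 2 * s)) atBot (𝓝 0) := by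
    have h := (tendsto_Phi_atBot.comp hsqrts).const_mul (1/Real.sqrt π)
    rw [mul_zero] at h
    exact h.congr fun s => by simp only [Function.comp_def]
  have h := (hterm1.sub hterm2).add hterm3
  rw [show (0:ℝ) - 0 + 0 = 0 by ring] at h
  exact h.congr fun s => rfl

lemma tendsto_K_atTop : Tendsto K atTop (𝓝 (1/Real.sqrt π)) := by
  have hterm1 : Tendsto (fun s : ℝ => s * Phi s * Phi (-s)) atTop (𝓝 0) := by
    have h := tendsto_Phi_atTop.mul tendsto_mul_Phi_neg
    rw [show (1:ℝ) * 0 = 0 by ring] at h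
    apply h.congr
    intro s
    ring
  have hterm2 : Tendsto (fun s : ℝ => phi s * (2 * Phi s - 1)) atTop (𝓝 0) := by
    have h := tendsto_phi_atTop.mul (((tendsto_Phi_atTop.const_mul 2).sub_const 1))
    rw [show (0:ℝ) * (2 * 1 - 1) = 0 by ring] at h
    exact h
  have hsqrts : Tendsto (fun s : ℝ => Real.sqrt 2 * s) atTop atTop := by
    apply Tendsto.const_mul_atTop (Real.sqrt_pos.mpr (by norm_num)) tendsto_id
  have hterm3 : Tendsto (fun s : ℝ => (1/Real.sqrt π) * Phi (Real.sqrt 2 * s))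
      atTop (𝓝 (1/Real.sqrt π)) := by
    have h := (tendsto_Phi_atTop.comp hsqrts).const_mul (1/Real.sqrt π)
    rw [mul_one] at h
    exact h.congr fun s => by simp only [Function.comp_def]
  have h := (hterm1.sub hterm2).add hterm3
  rw [show (0:ℝ) - 0 + 1/Real.sqrt π = 1/Real.sqrt π by ring] at h
  exact h.congr fun s => rfl

lemma integrable_PhiPhiNeg : Integrable (fun s : ℝ => Phi s * Phi (-s)) := by
  have := integrable_PhiProd 0 0
  apply this.congr
  filter_upwards with s
  simp

lemma integral_PhiPhiNeg : ∫ s : ℝ, Phi s * Phi (-s) = 1/Real.sqrt π := by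
  have := integral_of_hasDerivAt_of_tendsto hasDerivAt_K integrable_PhiPhiNeg
    tendsto_K_atBot tendsto_K_atTop
  simpa using this

lemma key (b d : ℝ) (h : b ≤ d) : 1/Real.sqrt π ≤ ∫ t : ℝ, Phi (t - b) * Phi (d - t) := by
  have htrans : ∫ t : ℝ, Phi (t - b) * Phi (b - t) = 1/Real.sqrt π := by
    rw [← integral_PhiPhiNeg]
    have := integral_sub_right_eq_self (μ := volume) (fun s => Phi s * Phi (-s)) b
    rw [← this]
    congr 1
    funext t
    rw [neg_sub]
  rw [← htrans]
  apply integral_mono (integrable_PhiProd b b) (integrable_PhiProd b d)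
  intro t
  exact mul_le_mul_of_nonneg_left (Phi_mono (by linarith)) (Phi_nonneg _)

lemma part1 (x : ℝ) (hx : 0 ≤ x) :
    1 / Real.sqrt π ≤ x * Phi (x / Real.sqrt 2) + Real.sqrt 2 * phi (x / Real.sqrt 2) := by
  have h20 : (0:ℝ) < Real.sqrt 2 := Real.sqrt_pos.mpr (by norm_num)
  set u := x / Real.sqrt 2 with hu
  have hu0 : 0 ≤ u := div_nonneg hx h20.le
  have hxu : x = Real.sqrt 2 * u := by rw [hu]; field_simp
  have hstep : phi 0 - phi u ≤ u * Phi u := by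
    have hFTC : ∫ s in (0:ℝ)..u, s * phi s = phi 0 - phi u := by
      have hd : ∀ s ∈ Set.uIcc (0:ℝ) u, HasDerivAt (fun s => -phi s) (s * phi s) s := by
        intro s _
        have := (hasDerivAt_phi s).neg
        refine this.congr_deriv ?_
        ring
      rw [intervalIntegral.integral_eq_sub_of_hasDerivAt hd
        ((continuous_id.mul phi_cont).intervalIntegrable 0 u)]
      ring
    have hmono : ∫ s in (0:ℝ)..u, s * phi s ≤ ∫ s in (0:ℝ)..u, u * phi s := by
      apply intervalIntegral.integral_mono_on hu0
        ((continuous_id.mul phi_cont).intervalIntegrable 0 u)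
        ((continuous_const.mul phi_cont).intervalIntegrable 0 u)
      intro s hs
      exact mul_le_mul_of_nonneg_right hs.2 (phi_pos s).le
    have hPhi : ∫ s in (0:ℝ)..u, phi s ≤ Phi u := by
      have h1 := Phi_eq_add u
      have h0 : 0 ≤ Phi 0 := Phi_nonneg 0
      linarith
    calc phi 0 - phi u = ∫ s in (0:ℝ)..u, s * phi s := hFTC.symm
      _ ≤ ∫ s in (0:ℝ)..u, u * phi s := hmono
      _ = u * ∫ s in (0:ℝ)..u, phi s := by rw [intervalIntegral.integral_const_mul]
      _ ≤ u * Phi u := mul_le_mul_of_nonneg_left hPhi hu0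
  have hphi0 : Real.sqrt 2 * phi 0 = 1 / Real.sqrt π := by
    unfold phi
    rw [Real.sqrt_mul (by norm_num) π]
    rw [show (-(0:ℝ)^2/2) = 0 by norm_num, Real.exp_zero]
    have hπ0 : (0:ℝ) < Real.sqrt π := Real.sqrt_pos.mpr pi_pos
    field_simp
  calc 1/Real.sqrt π = Real.sqrt 2 * phi 0 := hphi0.symm
    _ ≤ Real.sqrt 2 * (u * Phi u + phi u) := by nlinarith
    _ = x * Phi u + Real.sqrt 2 * phi u := by rw [hxu]; ring

theorem stmt12 (E : Multiset (ℝ × ℝ)) (hE : ∀ p ∈ E, p.1 < p.2) :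
    (∀ x : ℝ, 0 ≤ x →
      1 / Real.sqrt Real.pi ≤
        x * Phi (x / Real.sqrt 2) + Real.sqrt 2 * phi (x / Real.sqrt 2)) ∧
    (E.card : ℝ) / Real.sqrt Real.pi ≤
      ∫ t : ℝ, |(E.map (fun p => Phi (t - p.1) * Phi (p.2 - t))).sum| := by
  constructor
  · exact fun x hx => part1 x hx
  · have main : ∀ (F : Multiset (ℝ × ℝ)), (∀ p ∈ F, p.1 < p.2) →
        Integrable (fun t => (F.map (fun p => Phi (t - p.1) * Phi (p.2 - t))).sum) ∧
        (F.card : ℝ) / Real.sqrt π ≤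
          ∫ t : ℝ, (F.map (fun p => Phi (t - p.1) * Phi (p.2 - t))).sum := by
      intro F
      induction F using Multiset.induction_on with
      | empty =>
        intro _
        constructor
        · simpa using (integrable_const (0:ℝ))
        · simp
      | cons p F ih =>
        intro hF
        have hp := hF p (Multiset.mem_cons_self p F)
        obtain ⟨ihInt, ihLe⟩ := ih (fun q hq => hF q (Multiset.mem_cons_of_mem hq))
        have heq : (fun t => ((p ::ₘ F).map (fun q => Phi (t - q.1) * Phi (q.2 - t))).sum)
            = fun t => Phi (t - p.1) * Phi (p.2 - t)
              + (F.map (fun q => Phi (t - q.1) * Phi (q.2 - t))).sum := by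
          funext t
          simp [Multiset.map_cons, Multiset.sum_cons]
        constructor
        · rw [heq]
          exact (integrable_PhiProd p.1 p.2).add ihInt
        · rw [heq]
          rw [integral_add (integrable_PhiProd p.1 p.2) ihInt]
          have hk := key p.1 p.2 hp.le
          have hcard : ((p ::ₘ F).card : ℝ) = (F.card : ℝ) + 1 := by
            rw [Multiset.card_cons]; push_cast; ring
          rw [hcard, add_div]
          have : (1:ℝ) / Real.sqrt π = 1 / Real.sqrt π := rfl
          linarith
    obtain ⟨hint, hle⟩ := main E hE
    have habs : (fun t => |(E.map (fun p => Phi (t - p.1) * Phi (p.2 - t))).sum|)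
        = fun t => (E.map (fun p => Phi (t - p.1) * Phi (p.2 - t))).sum := by
      funext t
      apply abs_of_nonneg
      apply Multiset.sum_nonneg
      intro a ha
      obtain ⟨q, _, rfl⟩ := Multiset.mem_map.mp ha
      exact mul_nonneg (Phi_nonneg _) (Phi_nonneg _)
    rw [habs]
    exact hle
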